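/- The AUROC-OVA index is not invariant under equivalence of confusion matrices: there exist an integer C ≥ 3 and two equivalent C-class confusion matrices M and M' (satisfying m_ij/n_i = m'_ij/n'_i for all i, j) such that ρ_a(M) ≠ ρ_a(M'). -/

import Mathlib

open Finset

/-- The AUROC-OVA index `ρ_a` of a `C`-class confusion matrix `m`, where
`n_i` is the `i`-th row sum, `k_i` the `i`-th column sum and `n` the total. -/
noncomputable def rhoOVA (C : ℕ) (m : Fin C → Fin C → ℕ) : ℝ :=
  (1 / (2 * (C : ℝ))) *
    ∑ i, (1 + (m i i : ℝ) / (∑ j, (m i j : ℝ))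
      - ((∑ j, (m j i : ℝ)) - (m i i : ℝ)) /
          ((∑ a, ∑ b, (m a b : ℝ)) - ∑ j, (m i j : ℝ)))

/-- AUROC-OVA is not invariant under equivalence of confusion matrices:
there exist `C ≥ 3` and equivalent `C`-class confusion matrices `M`, `M'` with
`ρ_a(M) ≠ ρ_a(M')`. -/
theorem rhoOVA_not_invariant_equiv :
    ∃ (C : ℕ), 3 ≤ C ∧ ∃ m m' : Fin C → Fin C → ℕ,
      (∀ i, 0 < ∑ j, m i j) ∧ (∀ i, 0 < ∑ j, m' i j) ∧
      (∀ i j, (m i j : ℝ) / (∑ l, (m i l : ℝ))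
        = (m' i j : ℝ) / (∑ l, (m' i l : ℝ))) ∧
      rhoOVA C m ≠ rhoOVA C m' := by
  refine ⟨3, le_refl 3, ![![1,1,0],![0,1,0],![0,0,1]], ![![2,2,0],![0,1,0],![0,0,1]],
    ?_, ?_, ?_, ?_⟩
  · intro i; fin_cases i <;> simp [Fin.sum_univ_three]
  · intro i; fin_cases i <;> simp [Fin.sum_univ_three]
  · intro i j; fin_cases i <;> fin_cases j <;> norm_num [Fin.sum_univ_three, Matrix.cons_val_two, Matrix.vecHead, Matrix.vecTail]
  · simp only [rhoOVA, Fin.sum_univ_three, Matrix.cons_val_zero, Matrix.cons_val_one,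
      Matrix.head_cons, Matrix.cons_val_two, Matrix.tail_cons, Matrix.vecHead, Matrix.vecTail]
    norm_num [Matrix.cons_val_two, Matrix.vecHead, Matrix.vecTail]
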